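/- Duality identity for the weighted polymer mass. Let V̄, Λ̄ ∈ ℝ, let τ, μ, β : (0,∞) → [0,∞), let κ : (0,∞)×(0,∞) → [0,∞) vanish for x ≥ y, and let φ : (0,∞) → (0,∞) be differentiable and satisfy the adjoint equation −V̄·τ(x)·φ'(x) + (μ(x)+β(x))·φ(x) = 2β(x)·∫₀^x κ(y,x)φ(y)dy + Λ̄·φ(x) for all x > 0. Fix t and suppose: u(·,t) ≥ 0 satisfies ∂ₜu(x,t) = −V(t)·∂ₓ(τ(x)u(x,t)) − (μ(x)+β(x))u(x,t) + 2∫ₓ^∞ β(y)κ(x,y)u(y,t)dy pointwise on (0,∞); the functions u(·,t)φ, (μ+β)u(·,t)φ, τu(·,t)φ' and ∂ₓ(τu)(·,t)·φ are integrable; τ(x)u(x,t)φ(x) → 0 as x→0⁺ and as x→∞; (x,y) ↦ β(y)κ(x,y)u(y,t)φ(x) is integrable over {0 < x < y}; and s ↦ ∫₀^∞ u(x,s)φ(x)dx is differentiable at t with derivative ∫₀^∞ ∂ₜu(x,t)φ(x)dx. Then d/dt ∫₀^∞ u(x,t)φ(x)dx = −Λ̄·∫₀^∞ u(x,t)φ(x)dx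 + (V(t) − V̄)·∫₀^∞ τ(x)φ'(x)u(x,t)dx. -/

import Mathlib

open MeasureTheory Set Filter Topology

/-- **Duality identity for the weighted polymer mass**: if `φ > 0` solves the adjoint
eigenvalue equation at monomer level `V̄` with eigenvalue `Λ̄`, and `u(·,t) ≥ 0` solves
the polymer equation pointwise at time `t` (with suitable integrability, decay and
differentiation-under-the-integral hypotheses), then
`d/dt ∫ u φ = −Λ̄ ∫ u φ + (V(t) − V̄) ∫ τ φ' u`. -/
theorem duality_identity_weighted_mass
    (Vbar Lam : ℝ) (tau mu beta : ℝ → ℝ) (kappa : ℝ → ℝ → ℝ)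
    (htau_nn : ∀ x > 0, 0 ≤ tau x) (hmu_nn : ∀ x > 0, 0 ≤ mu x)
    (hbeta_nn : ∀ x > 0, 0 ≤ beta x)
    (hkap_nn : ∀ x y : ℝ, 0 ≤ kappa x y)
    (hkap_supp : ∀ x y : ℝ, y ≤ x → kappa x y = 0)
    (phi phi' : ℝ → ℝ)
    (hphi_pos : ∀ x > 0, 0 < phi x)
    (hphi_deriv : ∀ x > 0, HasDerivAt phi (phi' x) x)
    -- the adjoint eigenvalue equation
    (hadj : ∀ x > 0,
      -Vbar * tau x * phi' x + (mu x + beta x) * phi x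
        = 2 * beta x * (∫ y in (0:ℝ)..x, kappa y x * phi y) + Lam * phi x)
    (V : ℝ → ℝ) (u : ℝ → ℝ → ℝ) (t : ℝ) (ut Dx : ℝ → ℝ)
    (hu_nn : ∀ x > 0, 0 ≤ u x t)
    -- Dx x is the spatial derivative of τ u(·,t) at x, ut x the time derivative of u(x,·) at t
    (hDx : ∀ x > 0, HasDerivAt (fun y => tau y * u y t) (Dx x) x)
    (hut : ∀ x > 0, HasDerivAt (fun s => u x s) (ut x) t)
    -- the polymer equation holds pointwise on (0,∞)
    (hpde : ∀ x > 0, ut x = -V t * Dx x - (mu x + beta x) * u x t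
        + 2 * ∫ y in Ioi x, beta y * kappa x y * u y t)
    -- integrability hypotheses
    (hint_uphi : IntegrableOn (fun x => u x t * phi x) (Ioi 0))
    (hint_mb : IntegrableOn (fun x => (mu x + beta x) * u x t * phi x) (Ioi 0))
    (hint_tau : IntegrableOn (fun x => tau x * u x t * phi' x) (Ioi 0))
    (hint_Dx : IntegrableOn (fun x => Dx x * phi x) (Ioi 0))
    -- decay of τ u φ at 0⁺ and ∞
    (hlim0 : Tendsto (fun x => tau x * u x t * phi x) (nhdsWithin 0 (Ioi 0)) (nhds 0))
    (hlimtop : Tendsto (fun x => tau x * u x t * phi x) atTop (nhds 0))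
    -- integrability of the fragmentation term on {0 < x < y}
    (hint_frag : IntegrableOn
        (fun p : ℝ × ℝ => beta p.2 * kappa p.1 p.2 * u p.2 t * phi p.1)
        {p : ℝ × ℝ | 0 < p.1 ∧ p.1 < p.2})
    -- the weighted mass is differentiable at t with derivative ∫ ∂ₜu φ
    (hM : HasDerivAt (fun s => ∫ x in Ioi (0:ℝ), u x s * phi x)
        (∫ x in Ioi (0:ℝ), ut x * phi x) t) :
    HasDerivAt (fun s => ∫ x in Ioi (0:ℝ), u x s * phi x)
      (-Lam * (∫ x in Ioi (0:ℝ), u x t * phi x)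
        + (V t - Vbar) * ∫ x in Ioi (0:ℝ), tau x * phi' x * u x t) t := by
  -- Notation
  set g : ℝ → ℝ := fun x => tau x * u x t * phi x with hg_def
  set g' : ℝ → ℝ := fun x => Dx x * phi x + tau x * u x t * phi' x with hg'_def
  -- derivative of g on (0,∞)
  have hderiv_g : ∀ x ∈ Ioi (0:ℝ), HasDerivAt g (g' x) x := by
    intro x hx
    have := (hDx x hx).mul (hphi_deriv x hx)
    simpa [hg_def, hg'_def, Pi.mul_def] using this
  have hint_g' : IntegrableOn g' (Ioi 0) := hint_Dx.add hint_tau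
  -- Step 1: integration by parts on (0,∞): ∫ g' = 0
  have hIBP0 : (∫ x in Ioi (0:ℝ), g' x) = 0 := by
    set s : ℕ → Set ℝ := fun n => Ioi (1 / (n + 1) : ℝ) with hs_def
    have hpos : ∀ n : ℕ, (0:ℝ) < 1 / (n + 1) := by
      intro n; positivity
    have hs_meas : ∀ n, MeasurableSet (s n) := fun n => measurableSet_Ioi
    have hs_mono : Monotone s := by
      intro n m hnm
      apply Ioi_subset_Ioi
      gcongr
    have hs_union : (⋃ n, s n) = Ioi (0:ℝ) := by
      ext x
      simp only [mem_iUnion, hs_def, mem_Ioi]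
      constructor
      · rintro ⟨n, hn⟩; exact lt_trans (hpos n) hn
      · intro hx
        obtain ⟨n, hn⟩ := exists_nat_one_div_lt hx
        exact ⟨n, hn⟩
    have htendsto : Tendsto (fun n => ∫ x in s n, g' x) atTop
        (𝓝 (∫ x in Ioi (0:ℝ), g' x)) := by
      have := tendsto_setIntegral_of_monotone hs_meas hs_mono
        (by rw [hs_union]; exact hint_g')
      rwa [hs_union] at this
    have hval : ∀ n : ℕ, (∫ x in s n, g' x) = 0 - g (1 / (n + 1) : ℝ) := by
      intro n
      have ha : (0:ℝ) < 1 / (n + 1) := hpos n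
      refine integral_Ioi_of_hasDerivAt_of_tendsto ?_ ?_ ?_ hlimtop
      · exact (hderiv_g _ ha).continuousAt.continuousWithinAt
      · intro x hx
        exact hderiv_g x (lt_trans ha hx)
      · exact hint_g'.mono_set (Ioi_subset_Ioi ha.le)
    have htendsto' : Tendsto (fun n => ∫ x in s n, g' x) atTop (𝓝 0) := by
      have h1 : Tendsto (fun n : ℕ => (1 / (n + 1) : ℝ)) atTop (𝓝[>] 0) := by
        apply tendsto_nhdsWithin_of_tendsto_nhds_of_eventually_within
        · exact tendsto_one_div_add_atTop_nhds_zero_nat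
        · exact Eventually.of_forall fun n => hpos n
      have h2 : Tendsto (fun n : ℕ => g (1 / (n + 1) : ℝ)) atTop (𝓝 0) :=
        hlim0.comp h1
      have h3 : Tendsto (fun n : ℕ => 0 - g (1 / (n + 1) : ℝ)) atTop (𝓝 (0 - 0)) :=
        tendsto_const_nhds.sub h2
      simp only [sub_zero] at h3
      exact h3.congr fun n => (hval n).symm
    exact tendsto_nhds_unique htendsto htendsto'
  have hIBP : (∫ x in Ioi (0:ℝ), Dx x * phi x)
      = -∫ x in Ioi (0:ℝ), tau x * u x t * phi' x := by
    have := integral_add hint_Dx hint_tau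
    rw [hg'_def] at hIBP0
    rw [this] at hIBP0
    linarith
  -- Step 2: Fubini for the fragmentation term
  set f : ℝ × ℝ → ℝ := fun p => beta p.2 * kappa p.1 p.2 * u p.2 t * phi p.1 with hf_def
  set S : Set (ℝ × ℝ) := {p : ℝ × ℝ | 0 < p.1 ∧ p.1 < p.2} with hS_def
  have hS_meas : MeasurableSet S :=
    (measurableSet_lt measurable_const measurable_fst).inter
      (measurableSet_lt measurable_fst measurable_snd)
  set F : ℝ × ℝ → ℝ := S.indicator f with hF_def
  have hF_int : Integrable F (volume : Measure (ℝ × ℝ)) :=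
    (integrable_indicator_iff hS_meas).2 hint_frag
  have hF_int' : Integrable F ((volume : Measure ℝ).prod (volume : Measure ℝ)) := by
    rwa [Measure.volume_eq_prod] at hF_int
  -- inner integral in y, for fixed x
  have hinner_x : ∀ x : ℝ, (∫ y, F (x, y))
      = (Ioi (0:ℝ)).indicator
          (fun x => (∫ y in Ioi x, beta y * kappa x y * u y t) * phi x) x := by
    intro x
    by_cases hx : 0 < x
    · have hset : (fun y => F (x, y)) = (Ioi x).indicator (fun y => f (x, y)) := by
        funext y
        simp only [hF_def, hS_def, indicator, mem_setOf_eq, mem_Ioi, hx, true_and]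
      rw [hset, integral_indicator measurableSet_Ioi]
      rw [indicator_of_mem (mem_Ioi.2 hx)]
      simp only [hf_def]
      rw [← integral_mul_const]
    · have hset : (fun y => F (x, y)) = fun _ => (0:ℝ) := by
        funext y
        simp only [hF_def, hS_def, indicator, mem_setOf_eq]
        rw [if_neg (by tauto)]
      rw [hset, integral_zero, indicator_of_notMem (by simpa using hx)]
  -- inner integral in x, for fixed y
  have hinner_y : ∀ y : ℝ, (∫ x, F (x, y))
      = (Ioi (0:ℝ)).indicator
          (fun y => beta y * u y t * ∫ x in (0:ℝ)..y, kappa x y * phi x) y := by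
    intro y
    have hset : (fun x => F (x, y)) = (Ioo 0 y).indicator (fun x => f (x, y)) := by
      funext x
      by_cases h : x ∈ Ioo 0 y
      · rw [indicator_of_mem h, hF_def,
          indicator_of_mem (by simpa [hS_def, mem_Ioo] using h)]
      · rw [indicator_of_notMem h, hF_def,
          indicator_of_notMem (by simpa [hS_def, mem_Ioo] using h)]
    rw [hset, integral_indicator measurableSet_Ioo]
    by_cases hy : 0 < y
    · rw [indicator_of_mem (mem_Ioi.2 hy)]
      rw [intervalIntegral.integral_of_le hy.le, integral_Ioc_eq_integral_Ioo]
      rw [← integral_const_mul]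
      apply setIntegral_congr_fun measurableSet_Ioo
      intro x _
      simp only [hf_def]; ring
    · rw [indicator_of_notMem (by simpa using hy)]
      rw [Ioo_eq_empty (by linarith [le_of_not_gt hy])]
      simp
  -- the Fubini identity
  have hfub : (∫ x in Ioi (0:ℝ), (∫ y in Ioi x, beta y * kappa x y * u y t) * phi x)
      = ∫ y in Ioi (0:ℝ), beta y * u y t * ∫ x in (0:ℝ)..y, kappa x y * phi x := by
    have hswap : (∫ x, ∫ y, F (x, y)) = ∫ y, ∫ x, F (x, y) := by
      have := integral_integral_swap (f := fun x y => F (x, y))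
        (by exact hF_int')
      simpa using this
    calc (∫ x in Ioi (0:ℝ), (∫ y in Ioi x, beta y * kappa x y * u y t) * phi x)
        = ∫ x, (Ioi (0:ℝ)).indicator
            (fun x => (∫ y in Ioi x, beta y * kappa x y * u y t) * phi x) x := by
          rw [integral_indicator measurableSet_Ioi]
      _ = ∫ x, ∫ y, F (x, y) := by
          exact (integral_congr_ae (Eventually.of_forall fun x => (hinner_x x))).symm
      _ = ∫ y, ∫ x, F (x, y) := hswap
      _ = ∫ y, (Ioi (0:ℝ)).indicator
            (fun y => beta y * u y t * ∫ x in (0:ℝ)..y, kappa x y * phi x) y := by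
          exact integral_congr_ae (Eventually.of_forall fun y => (hinner_y y))
      _ = ∫ y in Ioi (0:ℝ), beta y * u y t * ∫ x in (0:ℝ)..y, kappa x y * phi x := by
          rw [integral_indicator measurableSet_Ioi]
  -- integrability of the fragmentation term as a function of x
  have hI1 : IntegrableOn
      (fun x => (∫ y in Ioi x, beta y * kappa x y * u y t) * phi x) (Ioi 0) := by
    have h1 : Integrable (fun x => ∫ y, F (x, y)) (volume : Measure ℝ) :=
      hF_int'.integral_prod_left
    have h2 : Integrable ((Ioi (0:ℝ)).indicator
        (fun x => (∫ y in Ioi x, beta y * kappa x y * u y t) * phi x))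
        (volume : Measure ℝ) := by
      apply h1.congr
      exact Eventually.of_forall fun x => hinner_x x
    exact (integrable_indicator_iff measurableSet_Ioi).1 h2
  -- Step 3: adjoint substitution
  have hkey : (∫ y in Ioi (0:ℝ), 2 * (beta y * u y t * ∫ x in (0:ℝ)..y, kappa x y * phi x))
      = -Vbar * (∫ x in Ioi (0:ℝ), tau x * u x t * phi' x)
        + (∫ x in Ioi (0:ℝ), (mu x + beta x) * u x t * phi x)
        - Lam * (∫ x in Ioi (0:ℝ), u x t * phi x) := by
    have hptw : ∀ y ∈ Ioi (0:ℝ),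
        2 * (beta y * u y t * ∫ x in (0:ℝ)..y, kappa x y * phi x)
          = -Vbar * (tau y * u y t * phi' y) + (mu y + beta y) * u y t * phi y
            - Lam * (u y t * phi y) := by
      intro y hy
      have h := hadj y hy
      have h2 : 2 * beta y * (∫ x in (0:ℝ)..y, kappa x y * phi x)
          = -Vbar * tau y * phi' y + (mu y + beta y) * phi y - Lam * phi y := by
        linarith
      calc 2 * (beta y * u y t * ∫ x in (0:ℝ)..y, kappa x y * phi x)
          = u y t * (2 * beta y * (∫ x in (0:ℝ)..y, kappa x y * phi x)) := by ring
        _ = u y t * (-Vbar * tau y * phi' y + (mu y + beta y) * phi y - Lam * phi y) := by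
            rw [h2]
        _ = -Vbar * (tau y * u y t * phi' y) + (mu y + beta y) * u y t * phi y
            - Lam * (u y t * phi y) := by ring
    rw [setIntegral_congr_fun measurableSet_Ioi hptw]
    rw [integral_sub
        (f := fun y => -Vbar * (tau y * u y t * phi' y) + (mu y + beta y) * u y t * phi y)
        (g := fun y => Lam * (u y t * phi y))
        ((hint_tau.const_mul (-Vbar)).add hint_mb) (hint_uphi.const_mul Lam)]
    rw [integral_add
        (f := fun y => -Vbar * (tau y * u y t * phi' y))
        (g := fun y => (mu y + beta y) * u y t * phi y)
        (hint_tau.const_mul (-Vbar)) hint_mb]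
    rw [integral_const_mul, integral_const_mul]
  -- Step 4: the main identity
  have hmain : (∫ x in Ioi (0:ℝ), ut x * phi x)
      = -Lam * (∫ x in Ioi (0:ℝ), u x t * phi x)
        + (V t - Vbar) * (∫ x in Ioi (0:ℝ), tau x * u x t * phi' x) := by
    have hptw : ∀ x ∈ Ioi (0:ℝ), ut x * phi x
        = -V t * (Dx x * phi x) - (mu x + beta x) * u x t * phi x
          + 2 * ((∫ y in Ioi x, beta y * kappa x y * u y t) * phi x) := by
      intro x hx
      rw [hpde x hx]; ring
    rw [setIntegral_congr_fun measurableSet_Ioi hptw]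
    rw [integral_add
        (f := fun x => -V t * (Dx x * phi x) - (mu x + beta x) * u x t * phi x)
        (g := fun x => 2 * ((∫ y in Ioi x, beta y * kappa x y * u y t) * phi x))
        ((hint_Dx.const_mul (-V t)).sub hint_mb) (hI1.const_mul 2)]
    rw [integral_sub
        (f := fun x => -V t * (Dx x * phi x))
        (g := fun x => (mu x + beta x) * u x t * phi x)
        (hint_Dx.const_mul (-V t)) hint_mb]
    rw [integral_const_mul, integral_const_mul, hfub, hIBP]
    rw [← integral_const_mul]
    rw [hkey]
    ring
  -- conclude
  have hB : (∫ x in Ioi (0:ℝ), tau x * phi' x * u x t)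
      = ∫ x in Ioi (0:ℝ), tau x * u x t * phi' x := by
    apply setIntegral_congr_fun measurableSet_Ioi
    intro x _; ring
  rw [hmain] at hM
  rwa [hB]
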